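/- Let G be a finite group, D ≤ G, and τ = ℚ[G/D] the rational permutation representation equipped with the standard pairing making the cosets of G/D an orthonormal basis. Then for every subgroup H ≤ G, the determinant of (1/|H|)⟨·,·⟩ on the H-invariants τ^H (computed in the basis of H-orbit sums) equals ∏_{w ∈ H\G/D} 1/|H ∩ wDw^{-1}|. -/
import Mathlib

open scoped BigOperators

theorem stmt11 {G : Type*} [Group G] [Fintype G] [DecidableEq G] (D H : Subgroup G)
    (T : Finset G)
    (hT : ∀ g : G, ∃! t, t ∈ T ∧ ∃ h ∈ H, ∃ k ∈ D, g = h * t * k) :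
    Matrix.det (Matrix.of fun t t' : ↥T =>
        ((Nat.card ↥({x : G ⧸ D | ∃ h ∈ H, x = QuotientGroup.mk (h * (t : G))} ∩
            {x : G ⧸ D | ∃ h ∈ H, x = QuotientGroup.mk (h * ((t' : G)))}) : ℚ) /
          (Nat.card H : ℚ))) =
      ∏ t ∈ T, (1 : ℚ) / (Nat.card ↥(H ⊓ D.map (MulAut.conj t).toMonoidHom) : ℚ) := by
  classical
  set S : G → Set (G ⧸ D) := fun t => {x : G ⧸ D | ∃ h ∈ H, x = QuotientGroup.mk (h * t)}
    with hSdef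
  have horb : ∀ t : G, S t = MulAction.orbit H (QuotientGroup.mk t : G ⧸ D) := by
    intro t
    ext x
    constructor
    · rintro ⟨h, hh, rfl⟩
      exact ⟨⟨h, hh⟩, rfl⟩
    · rintro ⟨⟨h, hh⟩, rfl⟩
      exact ⟨h, hh, rfl⟩
  -- off-diagonal disjointness
  have hdisj : ∀ t t' : ↥T, t ≠ t' → S (t : G) ∩ S (t' : G) = ∅ := by
    rintro ⟨t, ht⟩ ⟨t', ht'⟩ hne
    rw [Set.eq_empty_iff_forall_notMem]
    rintro x ⟨⟨h, hh, rfl⟩, ⟨h', hh', hx⟩⟩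
    apply hne
    have hD : (h * t)⁻¹ * (h' * t') ∈ D := QuotientGroup.eq.mp hx
    have h1 : t ∈ T ∧ ∃ a ∈ H, ∃ k ∈ D, t' = a * t * k := by
      refine ⟨ht, h'⁻¹ * h, mul_mem (inv_mem hh') hh, t⁻¹ * h⁻¹ * h' * t', ?_, by group⟩
      have : (h * t)⁻¹ * (h' * t') = t⁻¹ * h⁻¹ * h' * t' := by group
      rwa [this] at hD
    have h2 : t' ∈ T ∧ ∃ a ∈ H, ∃ k ∈ D, t' = a * t' * k :=
      ⟨ht', 1, one_mem H, 1, one_mem D, by group⟩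
    have := (hT t').unique h1 h2
    exact Subtype.ext this
  -- stabilizer identification
  have hstab : ∀ t : G, MulAction.stabilizer H (QuotientGroup.mk t : G ⧸ D) =
      (H ⊓ D.map (MulAut.conj t).toMonoidHom).subgroupOf H := by
    intro t
    ext ⟨h, hh⟩
    rw [MulAction.mem_stabilizer_iff]
    show (QuotientGroup.mk (h * t) : G ⧸ D) = QuotientGroup.mk t ↔ _
    rw [QuotientGroup.eq, Subgroup.mem_subgroupOf, Subgroup.mem_inf]
    simp only [hh, true_and, Subgroup.mem_map, MulEquiv.coe_toMonoidHom, MulAut.conj_apply]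
    constructor
    · intro hd
      refine ⟨((h * t)⁻¹ * t)⁻¹, inv_mem hd, ?_⟩
      group
    · rintro ⟨d, hd, rfl⟩
      have : (t * d * t⁻¹ * t)⁻¹ * t = d⁻¹ := by group
      rw [this]
      exact inv_mem hd
  -- diagonal entry value
  have hdiag : ∀ t : G, (Nat.card (S t) : ℚ) / (Nat.card H : ℚ) =
      1 / (Nat.card ↥(H ⊓ D.map (MulAut.conj t).toMonoidHom) : ℚ) := by
    intro t
    have hos : Nat.card (MulAction.orbit H (QuotientGroup.mk t : G ⧸ D)) *
        Nat.card (MulAction.stabilizer H (QuotientGroup.mk t : G ⧸ D)) = Nat.card H := by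
      rw [← Nat.card_prod]
      exact Nat.card_congr (MulAction.orbitProdStabilizerEquivGroup H _)
    have hcs : Nat.card (MulAction.stabilizer H (QuotientGroup.mk t : G ⧸ D)) =
        Nat.card ↥(H ⊓ D.map (MulAut.conj t).toMonoidHom) := by
      rw [hstab t]
      exact Nat.card_congr (Subgroup.subgroupOfEquivOfLe inf_le_left).toEquiv
    rw [horb t, ← hcs, ← hos]
    have hb : (0 : ℚ) < (Nat.card (MulAction.stabilizer H (QuotientGroup.mk t : G ⧸ D)) : ℚ) := by
      exact_mod_cast Nat.card_pos
    have ha : (0 : ℚ) < (Nat.card (MulAction.orbit H (QuotientGroup.mk t : G ⧸ D)) : ℚ) := by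
      have : Nonempty (MulAction.orbit H (QuotientGroup.mk t : G ⧸ D)) :=
        ⟨⟨_, MulAction.mem_orbit_self _⟩⟩
      exact_mod_cast Nat.card_pos
    push_cast
    rw [div_eq_div_iff (mul_pos ha hb).ne' hb.ne']
    ring
  -- the matrix is diagonal
  have hmat : (Matrix.of fun t t' : ↥T =>
        ((Nat.card ↥({x : G ⧸ D | ∃ h ∈ H, x = QuotientGroup.mk (h * (t : G))} ∩
            {x : G ⧸ D | ∃ h ∈ H, x = QuotientGroup.mk (h * ((t' : G)))}) : ℚ) /
          (Nat.card H : ℚ))) =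
      Matrix.diagonal (fun t : ↥T =>
        (1 : ℚ) / (Nat.card ↥(H ⊓ D.map (MulAut.conj (t : G)).toMonoidHom) : ℚ)) := by
    ext t t'
    by_cases h : t = t'
    · subst h
      rw [Matrix.diagonal_apply_eq, Matrix.of_apply]
      have : ({x : G ⧸ D | ∃ h ∈ H, x = QuotientGroup.mk (h * (t : G))} ∩
          {x : G ⧸ D | ∃ h ∈ H, x = QuotientGroup.mk (h * ((t : G)))}) = S (t : G) :=
        Set.inter_self _
      rw [this, hdiag]
    · rw [Matrix.diagonal_apply_ne _ h, Matrix.of_apply]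
      have : ({x : G ⧸ D | ∃ h ∈ H, x = QuotientGroup.mk (h * (t : G))} ∩
          {x : G ⧸ D | ∃ h ∈ H, x = QuotientGroup.mk (h * ((t' : G)))}) = ∅ := hdisj t t' h
      rw [this]
      simp
  rw [hmat, Matrix.det_diagonal, ← Finset.prod_coe_sort T]
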